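/- Fix 0 < α < 1, a real n > 1, ω ∈ ℝ and k ∈ ℤ, and suppose (ω/α) · log n - arg Γ(-α/2 + iω) = kπ, where Γ is the complex Gamma function and arg the principal argument in (-π, π]. Then for every real j > 0: -√(n/j) · (α/4 + ω²/α) · Re[ Γ(-α/2 - iω) · (n/j)^{iω/α} ] = (-1)^{k+1} · (α/4 + ω²/α) · |Γ(-α/2 + iω)| · √n · cos((ω/α) · log j) / √j, where (n/j)^{z} = exp(z log(n/j)). -/

import Mathlib

open Real

/-- Log-periodic form of the eigenvector entries at an admissible frequency:
for all `j > 0`,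
`-√(n/j)(α/4+ω²/α) Re[Γ(-α/2-iω)(n/j)^{iω/α}]
  = (-1)^{k+1}(α/4+ω²/α)|Γ(-α/2+iω)| √n cos((ω/α) ln j)/√j`. -/
theorem stmt10 (α : ℝ) (h0 : 0 < α) (h1 : α < 1) (n : ℝ) (hn : 1 < n) (ω : ℝ) (k : ℤ)
    (h : (ω/α) * Real.log n
      - Complex.arg (Complex.Gamma (-(α : ℂ)/2 + (ω : ℂ) * Complex.I)) = k * π) :
    ∀ j : ℝ, 0 < j →
      -Real.sqrt (n/j) * (α/4 + ω^2/α) *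
        ((Complex.Gamma (-(α : ℂ)/2 - (ω : ℂ) * Complex.I) *
          ((n/j : ℝ) : ℂ) ^ (Complex.I * ((ω/α : ℝ) : ℂ))).re) =
      (-1 : ℝ) ^ (k + 1) * (α/4 + ω^2/α) *
        ‖Complex.Gamma (-(α : ℂ)/2 + (ω : ℂ) * Complex.I)‖ *
        Real.sqrt n * Real.cos ((ω/α) * Real.log j) / Real.sqrt j := by
  intro j hj
  have hnj : (0 : ℝ) < n / j := div_pos (lt_trans one_pos hn) hj
  set G := Complex.Gamma (-(α : ℂ)/2 + (ω : ℂ) * Complex.I) with hG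
  set θ := Complex.arg G with hθ
  set r := ‖G‖ with hr
  -- conjugate Gamma
  have hconj : Complex.Gamma (-(α : ℂ)/2 - (ω : ℂ) * Complex.I) = starRingEnd ℂ G := by
    rw [hG, ← Complex.Gamma_conj]
    congr 1
    rw [map_add, map_div₀, map_neg, Complex.conj_ofReal, map_mul, Complex.conj_ofReal,
      Complex.conj_I, map_ofNat]
    ring
  -- cpow as exp
  set φ := (ω/α) * Real.log (n/j) with hφ
  have hcpow : ((n/j : ℝ) : ℂ) ^ (Complex.I * ((ω/α : ℝ) : ℂ))
      = Complex.exp ((φ : ℝ) * Complex.I) := by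
    rw [Complex.cpow_def_of_ne_zero (by exact_mod_cast hnj.ne')]
    rw [← Complex.ofReal_log hnj.le]
    push_cast [hφ]
    ring_nf
  -- G = r * exp(θ I)
  have hGdec : G = (r : ℂ) * Complex.exp (θ * Complex.I) :=
    (Complex.norm_mul_exp_arg_mul_I G).symm
  have hre : (Complex.Gamma (-(α : ℂ)/2 - (ω : ℂ) * Complex.I) *
      ((n/j : ℝ) : ℂ) ^ (Complex.I * ((ω/α : ℝ) : ℂ))).re
      = r * Real.cos (φ - θ) := by
    rw [hconj, hcpow]
    conv_lhs => rw [hGdec]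
    rw [map_mul, ← Complex.exp_conj]
    have : (starRingEnd ℂ) ((θ : ℂ) * Complex.I) = ((-θ : ℝ) : ℂ) * Complex.I := by
      simp [Complex.ext_iff]
    rw [this, Complex.conj_ofReal, mul_assoc, ← Complex.exp_add, ← add_mul,
      ← Complex.ofReal_add]
    have : -θ + φ = φ - θ := by ring
    rw [this, Complex.re_ofReal_mul, Complex.exp_ofReal_mul_I_re]
  have hang : φ - θ = k * π - (ω/α) * Real.log j := by
    rw [hφ, Real.log_div (lt_trans one_pos hn).ne' hj.ne']
    rw [← h]
    ring
  have hcos : Real.cos (φ - θ) = (-1 : ℝ) ^ k * Real.cos ((ω/α) * Real.log j) := by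
    rw [hang, Real.cos_int_mul_pi_sub]
  have hsq : Real.sqrt (n/j) = Real.sqrt n / Real.sqrt j :=
    Real.sqrt_div (le_of_lt (lt_trans one_pos hn)) j
  have hpow : ((-1 : ℝ) ^ (k + 1) : ℝ) = (-1 : ℝ) ^ k * (-1) := by
    rw [zpow_add_one₀ (by norm_num : (-1:ℝ) ≠ 0)]
  rw [hre, hcos, hsq, hpow]
  ring
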